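/- (Lower semicontinuity from a measure-theoretic De Giorgi property.) Let Ω ⊆ ℝⁿ be open, let u : ℝⁿ → ℝ be measurable, locally integrable on Ω, and locally essentially bounded below on Ω, and fix c ∈ (0,1). Assume that for every a ∈ (0,1), every M > 0 and every μ ∈ ℝ there exists τ ∈ (0,1) such that for every y ∈ Ω and every ρ ∈ (0,1] with B_ρ(y) ⊆ Ω and μ ≤ ess inf_{B_ρ(y)} u: if |{x ∈ B_ρ(y) : u(x) ≤ μ + M}| ≤ τ |B_ρ(y)|, then u ≥ μ + aM almost everywhere in B_{cρ}(y). Then for every x ∈ Ω such that lim_{r→0} ⨍_{B_r(x)} |u(y) − u(x)| dy = 0 (a Lebesgue point of u), one has u(x) = lim_{r→0} ess inf_{B_r(x)} u. In particular, the function u_*(x) = lim_{r→0} ess inf_{B_r(x)} u is a lower semicontinuous representative of u in Ω. -/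

import Mathlib

open MeasureTheory Metric Set Filter

noncomputable section

/-- Euclidean space `ℝⁿ`. -/
abbrev Rn (n : ℕ) := EuclideanSpace ℝ (Fin n)

section Aux

variable {α : Type*} [MeasurableSpace α] {μ : MeasureTheory.Measure α} {u : α → ℝ}

lemma lsc_aux_cobdd (hμ : μ ≠ 0) (u : α → ℝ) :
    Filter.IsCoboundedUnder (· ≥ ·) (MeasureTheory.ae μ) u := by
  have h : ∃ a : ℝ, ∃ᶠ x in MeasureTheory.ae μ, u x ≤ a := by
    by_contra h
    push_neg at h
    have h' : ∀ n : ℕ, ∀ᵐ x ∂μ, ¬ (u x ≤ (n : ℝ)) := fun n => (h n).mono fun _ hx => not_le.mpr hx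
    have h2 : ∀ᵐ x ∂μ, ∀ n : ℕ, ¬ (u x ≤ (n : ℝ)) := ae_all_iff.mpr h'
    have h3 : ∀ᵐ _x ∂μ, False := by
      filter_upwards [h2] with x hx
      obtain ⟨n, hn⟩ := exists_nat_ge (u x)
      exact hx n hn
    exact hμ (ae_eq_bot.mp (by simpa [Filter.eventually_false_iff_eq_bot] using h3))
  obtain ⟨a, ha⟩ := h
  exact Filter.IsCoboundedUnder.of_frequently_le ha

lemma lsc_aux_le_essInf {a : ℝ} (hμ : μ ≠ 0) (h : ∀ᵐ y ∂μ, a ≤ u y) :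
    a ≤ essInf u μ :=
  Filter.le_liminf_of_le (lsc_aux_cobdd hμ u) h

lemma lsc_aux_ae_lt {m b : ℝ} (hm : ∀ᵐ y ∂μ, m ≤ u y) (hb : b < essInf u μ) :
    ∀ᵐ y ∂μ, b < u y :=
  ae_lt_of_lt_essInf hb ⟨m, Filter.eventually_map.mpr (hm.mono fun _ hy => hy)⟩

end Aux

/-- **Lower semicontinuity from a measure-theoretic De Giorgi property**
(`Lemma lscthm` / `Theorem lscthm1`): at every Lebesgue point `x` of `u`, the value
`u x` agrees with the limit of the essential infima over small balls centered at `x`. -/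
theorem lower_semicontinuity_from_property_D
    (n : ℕ) (hn : 1 ≤ n) (Ω : Set (Rn n)) (hΩ : IsOpen Ω)
    (u : Rn n → ℝ) (hu_meas : Measurable u)
    (hu_int : LocallyIntegrableOn u Ω)
    (hu_bdd : ∀ x ∈ Ω, ∃ ε > 0, ∃ m : ℝ, ∀ᵐ y ∂volume.restrict (ball x ε), m ≤ u y)
    (c : ℝ) (hc0 : 0 < c) (hc1 : c < 1)
    (hD : ∀ a : ℝ, 0 < a → a < 1 → ∀ M : ℝ, 0 < M → ∀ μ : ℝ,
      ∃ τ : ℝ, 0 < τ ∧ τ < 1 ∧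
        ∀ y ∈ Ω, ∀ ρ : ℝ, 0 < ρ → ρ ≤ 1 → ball y ρ ⊆ Ω →
          μ ≤ essInf u (volume.restrict (ball y ρ)) →
          volume {x ∈ ball y ρ | u x ≤ μ + M} ≤ ENNReal.ofReal τ * volume (ball y ρ) →
          ∀ᵐ x ∂volume.restrict (ball y (c * ρ)), μ + a * M ≤ u x) :
    ∀ x ∈ Ω,
      Tendsto (fun r : ℝ => ⨍ y in ball x r, |u y - u x|) (nhdsWithin 0 (Ioi 0)) (nhds 0) →
      Tendsto (fun r : ℝ => essInf u (volume.restrict (ball x r)))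
        (nhdsWithin 0 (Ioi 0)) (nhds (u x)) := by
  intro x hx hLeb
  classical
  obtain ⟨ε, hε, m, hm⟩ := hu_bdd x hx
  obtain ⟨ε', hε', hball⟩ := Metric.isOpen_iff.mp hΩ x hx
  set R : ℝ := min (min (ε / 2) (ε' / 2)) (1 / 2) with hRdef
  have hR0 : 0 < R := lt_min (lt_min (by linarith) (by linarith)) (by norm_num)
  have hRε : R ≤ ε / 2 := le_trans (min_le_left _ _) (min_le_left _ _)
  have hRε' : R ≤ ε' / 2 := le_trans (min_le_left _ _) (min_le_right _ _)
  have hR1 : R ≤ 1 / 2 := min_le_right _ _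
  have hsubΩ : closedBall x R ⊆ Ω := fun y hy =>
    hball (lt_of_le_of_lt (mem_closedBall.mp hy) (by linarith))
  have hintR : IntegrableOn u (closedBall x R) :=
    hu_int.integrableOn_compact_subset hsubΩ (isCompact_closedBall x R)
  -- basic facts for small balls
  have hball_pos : ∀ r : ℝ, 0 < r → (volume (ball x r)) ≠ 0 :=
    fun r hr => (measure_ball_pos volume x hr).ne'
  have hball_fin : ∀ r : ℝ, volume (ball x r) ≠ ⊤ := fun r => measure_ball_lt_top.ne
  have hres_ne : ∀ r : ℝ, 0 < r → volume.restrict (ball x r) ≠ 0 := fun r hr => by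
    simp [Measure.restrict_eq_zero, hball_pos r hr]
  have hmr : ∀ r : ℝ, 0 < r → r ≤ R → ∀ᵐ y ∂volume.restrict (ball x r), m ≤ u y := by
    intro r hr hrR
    exact ae_restrict_of_ae_restrict_of_subset
      (ball_subset_ball (by linarith)) hm
  have hint : ∀ r : ℝ, 0 < r → r ≤ R →
      Integrable (fun y => |u y - u x|) (volume.restrict (ball x r)) := by
    intro r hr hrR
    have h1 : IntegrableOn u (ball x r) :=
      hintR.mono_set ((ball_subset_ball hrR).trans ball_subset_closedBall)
    exact ((h1.sub (integrableOn_const measure_ball_lt_top.ne)).abs)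
  set g : ℝ → ℝ := fun r => essInf u (volume.restrict (ball x r)) with hgdef
  -- monotonicity
  have gmono : ∀ r s : ℝ, 0 < r → r ≤ s → s ≤ R → g s ≤ g r := by
    intro r s hr hrs hsR
    by_contra hlt
    push_neg at hlt
    set b := (g r + g s) / 2 with hb
    have hb1 : g r < b := by simp only [hb]; linarith
    have hb2 : b < g s := by simp only [hb]; linarith
    have h1 : ∀ᵐ y ∂volume.restrict (ball x s), b < u y :=
      lsc_aux_ae_lt (hmr s (lt_of_lt_of_le hr hrs) hsR) hb2
    have h2 : ∀ᵐ y ∂volume.restrict (ball x r), b ≤ u y :=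
      (ae_restrict_of_ae_restrict_of_subset (ball_subset_ball hrs) h1).mono
        fun y hy => hy.le
    have := lsc_aux_le_essInf (hres_ne r hr) h2
    exact absurd this (not_le.mpr hb1)
  -- relation between integral and average
  have havg : ∀ r : ℝ, 0 < r →
      (∫ y in ball x r, |u y - u x|) =
        (volume (ball x r)).toReal * ⨍ y in ball x r, |u y - u x| := by
    intro r hr
    rw [average_eq, measureReal_restrict_apply_univ, measureReal_def, smul_eq_mul, ← mul_assoc,
      mul_inv_cancel₀ (by
        exact ENNReal.toReal_ne_zero.mpr ⟨hball_pos r hr, hball_fin r⟩), one_mul]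
  have havg_nonneg : ∀ r : ℝ, 0 ≤ ⨍ y in ball x r, |u y - u x| := by
    intro r
    rw [average_eq]
    positivity
  -- Markov inequality
  have markov : ∀ r : ℝ, 0 < r → r ≤ R → ∀ t : ℝ,
      t * ((volume.restrict (ball x r)) {y | t ≤ |u y - u x|}).toReal ≤
        (volume (ball x r)).toReal * ⨍ y in ball x r, |u y - u x| := by
    intro r hr hrR t
    rw [← havg r hr]
    exact mul_meas_ge_le_integral_of_nonneg
      (Filter.Eventually.of_forall fun y => abs_nonneg _) (hint r hr hrR) t
  -- upper estimate
  have upper : ∀ δ : ℝ, 0 < δ → ∃ r₂, 0 < r₂ ∧ r₂ ≤ R ∧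
      ∀ r, 0 < r → r ≤ r₂ → g r ≤ u x + δ := by
    intro δ hδ
    have hev : ∀ᶠ r in nhdsWithin (0 : ℝ) (Ioi 0),
        (⨍ y in ball x r, |u y - u x|) < δ := hLeb.eventually_lt_const hδ
    obtain ⟨r₂', hr₂', hsub₂⟩ := mem_nhdsGT_iff_exists_Ioc_subset.mp hev
    refine ⟨min r₂' R, lt_min hr₂' hR0, min_le_right _ _, ?_⟩
    intro r hr hrle
    by_contra hgt
    push_neg at hgt
    have hae : ∀ᵐ y ∂volume.restrict (ball x r), u x + δ < u y :=
      lsc_aux_ae_lt (hmr r hr (hrle.trans (min_le_right _ _))) hgt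
    have hae' : ∀ᵐ y ∂volume.restrict (ball x r), δ ≤ |u y - u x| := by
      filter_upwards [hae] with y hy
      calc δ ≤ u y - u x := by linarith
        _ ≤ |u y - u x| := le_abs_self _
    -- the event has full measure
    have hfull : ((volume.restrict (ball x r)) {y | δ ≤ |u y - u x|}) =
        volume (ball x r) := by
      have h0 : ((volume.restrict (ball x r)) {y | δ ≤ |u y - u x|}ᶜ) = 0 := by
        simpa only [Set.compl_setOf] using ae_iff.mp hae'
      have h1 : (volume.restrict (ball x r)) Set.univ ≤
          (volume.restrict (ball x r)) {y | δ ≤ |u y - u x|} +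
          (volume.restrict (ball x r)) {y | δ ≤ |u y - u x|}ᶜ := by
        rw [← Set.union_compl_self {y | δ ≤ |u y - u x|}]
        exact measure_union_le _ _
      rw [h0, add_zero, Measure.restrict_apply_univ] at h1
      exact le_antisymm ((measure_mono (Set.subset_univ _)).trans_eq
        (Measure.restrict_apply_univ _)) h1
    have hM := markov r hr (hrle.trans (min_le_right _ _)) δ
    rw [hfull] at hM
    have hbnd : (⨍ y in ball x r, |u y - u x|) < δ :=
      hsub₂ ⟨hr, hrle.trans (min_le_left _ _)⟩
    have hvpos : 0 < (volume (ball x r)).toReal :=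
      ENNReal.toReal_pos (hball_pos r hr) (hball_fin r)
    nlinarith
  -- the limit candidate
  set S : Set ℝ := g '' (Ioc (0 : ℝ) R) with hSdef
  have hSne : S.Nonempty := ⟨g R, ⟨R, ⟨hR0, le_rfl⟩, rfl⟩⟩
  have hub : ∀ δ : ℝ, 0 < δ → ∀ v ∈ S, v ≤ u x + δ := by
    intro δ hδ v hv
    obtain ⟨r, hr, rfl⟩ := hv
    obtain ⟨r₂, hr₂0, hr₂R, hr₂⟩ := upper δ hδ
    have hmin : 0 < min r r₂ := lt_min hr.1 hr₂0
    calc g r ≤ g (min r r₂) := gmono _ _ hmin (min_le_left _ _) hr.2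
      _ ≤ u x + δ := hr₂ _ hmin (min_le_right _ _)
  have hSbdd : BddAbove S := ⟨u x + 1, fun v hv => hub 1 one_pos v hv⟩
  set L : ℝ := sSup S with hLdef
  have hgL : ∀ r : ℝ, 0 < r → r ≤ R → g r ≤ L := fun r hr hrR =>
    le_csSup hSbdd ⟨r, ⟨hr, hrR⟩, rfl⟩
  have hLle : L ≤ u x := by
    refine le_of_forall_pos_le_add fun δ hδ => ?_
    exact csSup_le hSne (fun v hv => hub δ hδ v hv)
  have hLge : u x ≤ L := by
    by_contra hL
    push_neg at hL
    set M : ℝ := (u x - L) / 2 with hMdef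
    have hM : 0 < M := by simp only [hMdef]; linarith
    obtain ⟨τ, hτ0, hτ1, hDG⟩ := hD (1 / 2) one_half_pos (by norm_num) M hM (L - M / 8)
    obtain ⟨v, hvS, hv⟩ := exists_lt_of_lt_csSup hSne (show L - M / 8 < L by linarith)
    obtain ⟨ρ', hρ', rfl⟩ := hvS
    have hev : ∀ᶠ r in nhdsWithin (0 : ℝ) (Ioi 0),
        (⨍ y in ball x r, |u y - u x|) < τ * M :=
      hLeb.eventually_lt_const (mul_pos hτ0 hM)
    obtain ⟨r₃, hr₃pos, hsub₃⟩ := mem_nhdsGT_iff_exists_Ioc_subset.mp hev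
    set ρ : ℝ := min ρ' r₃ with hρdef
    have hρ0 : 0 < ρ := lt_min hρ'.1 hr₃pos
    have hρR : ρ ≤ R := (min_le_left _ _).trans hρ'.2
    have hρ1 : ρ ≤ 1 := hρR.trans (by linarith)
    have hρΩ : ball x ρ ⊆ Ω :=
      (ball_subset_ball hρR).trans (ball_subset_closedBall.trans hsubΩ)
    have hμle : L - M / 8 ≤ essInf u (volume.restrict (ball x ρ)) := by
      have : g ρ' ≤ g ρ := gmono ρ ρ' hρ0 (min_le_left _ _) hρ'.2
      exact le_of_lt (lt_of_lt_of_le hv this)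
    -- measure condition
    have hmeas_cond : volume {y ∈ ball x ρ | u y ≤ (L - M / 8) + M} ≤
        ENNReal.ofReal τ * volume (ball x ρ) := by
      have hsubset : {y ∈ ball x ρ | u y ≤ (L - M / 8) + M} ⊆
          {y | M ≤ |u y - u x|} ∩ ball x ρ := by
        rintro y ⟨hy1, hy2⟩
        refine ⟨?_, hy1⟩
        show M ≤ |u y - u x|
        have hux : u x = L + 2 * M := by simp only [hMdef]; ring
        rw [abs_sub_comm]
        calc M ≤ u x - u y := by rw [hux]; linarith
          _ ≤ |u x - u y| := le_abs_self _
      have hrestr : (volume.restrict (ball x ρ)) {y | M ≤ |u y - u x|} =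
          volume ({y | M ≤ |u y - u x|} ∩ ball x ρ) := by
        rw [Measure.restrict_apply
          (t := {y | M ≤ |u y - u x|})
          (measurableSet_le measurable_const ((hu_meas.sub measurable_const).abs))]
      have hM1 := markov ρ hρ0 hρR M
      have hbnd : (⨍ y in ball x ρ, |u y - u x|) ≤ τ * M :=
        (hsub₃ ⟨hρ0, min_le_right _ _⟩).le
      have hvnn : (0:ℝ) ≤ (volume (ball x ρ)).toReal := ENNReal.toReal_nonneg
      have hkey : ((volume.restrict (ball x ρ)) {y | M ≤ |u y - u x|}).toReal ≤
          τ * (volume (ball x ρ)).toReal := by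
        nlinarith [mul_le_mul_of_nonneg_left hbnd hvnn]
      calc volume {y ∈ ball x ρ | u y ≤ (L - M / 8) + M}
          ≤ volume ({y | M ≤ |u y - u x|} ∩ ball x ρ) := measure_mono hsubset
        _ = (volume.restrict (ball x ρ)) {y | M ≤ |u y - u x|} := hrestr.symm
        _ = ENNReal.ofReal
            (((volume.restrict (ball x ρ)) {y | M ≤ |u y - u x|}).toReal) := by
            rw [ENNReal.ofReal_toReal]
            exact ne_top_of_le_ne_top (hball_fin ρ)
              (by rw [hrestr]; exact measure_mono Set.inter_subset_right)
        _ ≤ ENNReal.ofReal (τ * (volume (ball x ρ)).toReal) :=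
            ENNReal.ofReal_le_ofReal hkey
        _ = ENNReal.ofReal τ * ENNReal.ofReal ((volume (ball x ρ)).toReal) :=
            ENNReal.ofReal_mul hτ0.le
        _ = ENNReal.ofReal τ * volume (ball x ρ) := by
            rw [ENNReal.ofReal_toReal (hball_fin ρ)]
    have hconc := hDG x hx ρ hρ0 hρ1 hρΩ hμle hmeas_cond
    have hcρ0 : 0 < c * ρ := mul_pos hc0 hρ0
    have hcρR : c * ρ ≤ R := by nlinarith
    have h1 : L - M / 8 + (1 / 2) * M ≤ g (c * ρ) :=
      lsc_aux_le_essInf (hres_ne _ hcρ0) hconc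
    have h2 : g (c * ρ) ≤ L := hgL _ hcρ0 hcρR
    linarith
  have hLeq : L = u x := le_antisymm hLle hLge
  -- final convergence
  rw [← hLeq]
  rw [tendsto_order]
  constructor
  · intro b hb
    obtain ⟨v, hvS, hv⟩ := exists_lt_of_lt_csSup hSne hb
    obtain ⟨ρ', hρ', rfl⟩ := hvS
    filter_upwards [Ioo_mem_nhdsGT_of_mem (⟨le_refl (0:ℝ), hρ'.1⟩ : (0:ℝ) ∈ Ico 0 ρ')]
      with r hr
    exact lt_of_lt_of_le hv (gmono r ρ' hr.1 hr.2.le hρ'.2)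
  · intro b hb
    have hδ : 0 < (b - L) / 2 := by linarith
    obtain ⟨r₂, hr₂0, hr₂R, hr₂⟩ := upper ((b - L) / 2) hδ
    filter_upwards [Ioo_mem_nhdsGT_of_mem (⟨le_refl (0:ℝ), hr₂0⟩ : (0:ℝ) ∈ Ico 0 r₂)]
      with r hr
    have := hr₂ r hr.1 hr.2.le
    rw [hLeq] at *
    linarith
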